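/- Let α ∈ (-1,1) and β⁻, β⁺ > 0, and set D = β⁺(α+1) + β⁻(1-α). Suppose w : ℝ → ℝ is twice differentiable with w'' = 0 on (-1,α) and on (α,1), is continuous on [-1,α) and on (α,1] with w(-1) = 0 and w(1) = 0, the one-sided limits w⁻(α) = lim_{x→α⁻} w(x), w⁺(α) = lim_{x→α⁺} w(x), lim_{x→α⁻} w'(x) and lim_{x→α⁺} w'(x) all exist, and the flux continuity condition lim_{x→α⁻} β⁻·w'(x) = lim_{x→α⁺} β⁺·w'(x) holds. Then, with j = w⁻(α) − w⁺(α), one has w(x) = j·(β⁺/D)(x+1) for all x ∈ [-1,α) and w(x) = j·(β⁻/D)(x-1) for all x ∈ (α,1]. In particular, the solution space of the homogeneous interface problem is spanned by the unit-jump response, i.e. it is one-dimensional. -/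

import Mathlib

open Set Filter

private lemma const_on_aux (a b : ℝ) (f : ℝ → ℝ)
    (hf : ∀ x ∈ Ioo a b, DifferentiableAt ℝ f x ∧ deriv f x = 0) :
    ∀ x ∈ Ioo a b, ∀ y ∈ Ioo a b, f x = f y := by
  intro x hx y hy
  refine (convex_Ioo a b).is_const_of_fderivWithin_eq_zero
    (fun z hz => (hf z hz).1.differentiableWithinAt) (fun z hz => ?_) hx hy
  rw [fderivWithin_of_isOpen isOpen_Ioo hz]
  refine ContinuousLinearMap.ext_ring ?_
  rw [fderiv_apply_one_eq_deriv, (hf z hz).2]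
  simp

private lemma eq_affine_aux (a b p L c : ℝ) (f : ℝ → ℝ) [NeBot (nhdsWithin p (Ioo a b))]
    (hf : ∀ x ∈ Ioo a b, DifferentiableAt ℝ f x ∧ deriv f x = c)
    (hL : Tendsto f (nhdsWithin p (Ioo a b)) (nhds L)) :
    ∀ x ∈ Ioo a b, f x = L + c * (x - p) := by
  have hg : ∀ x ∈ Ioo a b, DifferentiableAt ℝ (fun y => f y - c * y) x ∧
      deriv (fun y => f y - c * y) x = 0 := by
    intro x hx
    have hfd : HasDerivAt f c x := by
      rw [← (hf x hx).2]; exact (hf x hx).1.hasDerivAt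
    have h := hfd.sub ((hasDerivAt_id x).const_mul c)
    exact ⟨h.differentiableAt, by have := h.deriv; rw [mul_one, sub_self] at this; exact this⟩
  have hconst := const_on_aux a b _ hg
  intro x hx
  have h1 : Tendsto (fun y => f y - c * y) (nhdsWithin p (Ioo a b)) (nhds (f x - c * x)) := by
    refine Tendsto.congr' ?_ tendsto_const_nhds
    filter_upwards [self_mem_nhdsWithin] with y hy
    exact hconst x hx y hy
  have h2 : Tendsto (fun y => f y - c * y) (nhdsWithin p (Ioo a b)) (nhds (L - c * p)) :=
    hL.sub (((continuous_const.mul continuous_id).tendsto p).mono_left nhdsWithin_le_nhds)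
  have := tendsto_nhds_unique h1 h2
  linarith

/-- Any solution of the homogeneous interface problem (zero boundary values, harmonic on each
subdomain, flux continuity) is the jump amplitude `j = w⁻(α) − w⁺(α)` times the explicit
unit-jump response; hence the solution space is one-dimensional, spanned by the unit-jump
response. -/
theorem stmt_1 (α βm βp : ℝ) (hα : α ∈ Ioo (-1 : ℝ) 1) (hβm : 0 < βm) (hβp : 0 < βp)
    (D : ℝ) (hD : D = βp * (α + 1) + βm * (1 - α))
    (w : ℝ → ℝ) (wm wp dm dp : ℝ)
    -- twice differentiable with vanishing second derivative on each subdomain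
    (hdiff₁ : ∀ x ∈ Ioo (-1 : ℝ) α, DifferentiableAt ℝ w x ∧ DifferentiableAt ℝ (deriv w) x ∧
        deriv (deriv w) x = 0)
    (hdiff₂ : ∀ x ∈ Ioo α (1 : ℝ), DifferentiableAt ℝ w x ∧ DifferentiableAt ℝ (deriv w) x ∧
        deriv (deriv w) x = 0)
    -- one-sided continuity up to the boundary and boundary values
    (hcont₁ : ContinuousOn w (Ico (-1 : ℝ) α))
    (hcont₂ : ContinuousOn w (Ioc α (1 : ℝ)))
    (hbc₁ : w (-1) = 0) (hbc₂ : w 1 = 0)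
    -- existence of the one-sided limits of w and w' at α
    (hwm : Tendsto w (nhdsWithin α (Ioo (-1 : ℝ) α)) (nhds wm))
    (hwp : Tendsto w (nhdsWithin α (Ioo α (1 : ℝ))) (nhds wp))
    (hdm : Tendsto (deriv w) (nhdsWithin α (Ioo (-1 : ℝ) α)) (nhds dm))
    (hdp : Tendsto (deriv w) (nhdsWithin α (Ioo α (1 : ℝ))) (nhds dp))
    -- flux continuity across the interface
    (hflux : βm * dm = βp * dp) :
    (∀ x ∈ Ico (-1 : ℝ) α, w x = (wm - wp) * ((βp / D) * (x + 1))) ∧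
    (∀ x ∈ Ioc α (1 : ℝ), w x = (wm - wp) * ((βm / D) * (x - 1))) := by
  obtain ⟨hα1, hα2⟩ := hα
  haveI n1 : NeBot (nhdsWithin α (Ioo (-1 : ℝ) α)) := by
    rw [nhdsWithin_Ioo_eq_nhdsLT hα1]; infer_instance
  haveI n2 : NeBot (nhdsWithin α (Ioo α (1 : ℝ))) := by
    rw [nhdsWithin_Ioo_eq_nhdsGT hα2]; infer_instance
  haveI n3 : NeBot (nhdsWithin (-1 : ℝ) (Ioo (-1 : ℝ) α)) := by
    rw [nhdsWithin_Ioo_eq_nhdsGT hα1]; infer_instance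
  haveI n4 : NeBot (nhdsWithin (1 : ℝ) (Ioo α (1 : ℝ))) := by
    rw [nhdsWithin_Ioo_eq_nhdsLT hα2]; infer_instance
  -- the derivative is constant, equal to the one-sided limit, on each subinterval
  have hdm_eq : ∀ x ∈ Ioo (-1 : ℝ) α, deriv w x = dm := by
    intro x hx
    have := eq_affine_aux (-1) α α dm 0 (deriv w)
      (fun z hz => ⟨(hdiff₁ z hz).2.1, (hdiff₁ z hz).2.2⟩) hdm x hx
    simpa using this
  have hdp_eq : ∀ x ∈ Ioo α (1 : ℝ), deriv w x = dp := by
    intro x hx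
    have := eq_affine_aux α 1 α dp 0 (deriv w)
      (fun z hz => ⟨(hdiff₂ z hz).2.1, (hdiff₂ z hz).2.2⟩) hdp x hx
    simpa using this
  -- w is affine on each subinterval
  have hw1 : ∀ x ∈ Ioo (-1 : ℝ) α, w x = wm + dm * (x - α) :=
    eq_affine_aux (-1) α α wm dm w (fun z hz => ⟨(hdiff₁ z hz).1, hdm_eq z hz⟩) hwm
  have hw2 : ∀ x ∈ Ioo α (1 : ℝ), w x = wp + dp * (x - α) :=
    eq_affine_aux α 1 α wp dp w (fun z hz => ⟨(hdiff₂ z hz).1, hdp_eq z hz⟩) hwp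
  -- boundary conditions give the values of wm, wp
  have hbm : wm + dm * (-1 - α) = 0 := by
    have t1 : Tendsto w (nhdsWithin (-1 : ℝ) (Ioo (-1 : ℝ) α)) (nhds 0) := by
      have := hcont₁ (-1) ⟨le_refl _, hα1⟩
      rw [ContinuousWithinAt, hbc₁] at this
      exact this.mono_left (nhdsWithin_mono _ Ioo_subset_Ico_self)
    have t2 : Tendsto w (nhdsWithin (-1 : ℝ) (Ioo (-1 : ℝ) α)) (nhds (wm + dm * (-1 - α))) := by
      refine Tendsto.congr' ?_
        (((continuous_const.add (continuous_const.mul (continuous_id.sub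
          continuous_const))).tendsto (-1 : ℝ)).mono_left nhdsWithin_le_nhds)
      filter_upwards [self_mem_nhdsWithin] with y hy
      exact (hw1 y hy).symm
    exact (tendsto_nhds_unique t1 t2).symm
  have hbp : wp + dp * (1 - α) = 0 := by
    have t1 : Tendsto w (nhdsWithin (1 : ℝ) (Ioo α (1 : ℝ))) (nhds 0) := by
      have := hcont₂ 1 ⟨hα2, le_refl _⟩
      rw [ContinuousWithinAt, hbc₂] at this
      exact this.mono_left (nhdsWithin_mono _ Ioo_subset_Ioc_self)
    have t2 : Tendsto w (nhdsWithin (1 : ℝ) (Ioo α (1 : ℝ))) (nhds (wp + dp * (1 - α))) := by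
      refine Tendsto.congr' ?_
        (((continuous_const.add (continuous_const.mul (continuous_id.sub
          continuous_const))).tendsto (1 : ℝ)).mono_left nhdsWithin_le_nhds)
      filter_upwards [self_mem_nhdsWithin] with y hy
      exact (hw2 y hy).symm
    exact (tendsto_nhds_unique t1 t2).symm
  have hDpos : 0 < D := by rw [hD]; nlinarith
  have hD0 : D ≠ 0 := ne_of_gt hDpos
  have key1 : dm * D = (wm - wp) * βp := by
    rw [hD]; linear_combination (-βp) * hbm + βp * hbp + (1 - α) * hflux
  have key2 : dp * D = (wm - wp) * βm := by
    rw [hD]; linear_combination (-βm) * hbm + βm * hbp + (-(1 + α)) * hflux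
  have hdmv : dm = (wm - wp) * βp / D := by field_simp; linear_combination key1
  have hdpv : dp = (wm - wp) * βm / D := by field_simp; linear_combination key2
  constructor
  · intro x hx
    rcases eq_or_lt_of_le hx.1 with h | h
    · rw [← h, hbc₁]; ring
    · have hx' : x ∈ Ioo (-1 : ℝ) α := ⟨h, hx.2⟩
      have hwx : w x = dm * (x + 1) := by linear_combination hw1 x hx' + hbm
      rw [hwx, hdmv]; field_simp
  · intro x hx
    rcases eq_or_lt_of_le hx.2 with h | h
    · rw [h, hbc₂]; ring
    · have hx' : x ∈ Ioo α (1 : ℝ) := ⟨hx.1, h⟩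
      have hwx : w x = dp * (x - 1) := by linear_combination hw2 x hx' + hbp
      rw [hwx, hdpv]; field_simp
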